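/- Let k ≥ 2 and 1 ≤ j ≤ k−1. In the genus-k surface group Σ_k, the intersection P_j ∩ Q_j equals the cyclic subgroup generated by the image of the element [a_1,b_1][a_2,b_2]⋯[a_j,b_j] (equivalently, Σ_k splits as the amalgamated free product P_j ∗_{⟨c⟩} Q_j over this cyclic subgroup, and P_j ∩ Q_j = ⟨c⟩ where c is the image of [a_1,b_1]⋯[a_j,b_j]). -/

import Mathlib

open scoped commutatorElement


/-- The surface relator `[a_1,b_1][a_2,b_2]⋯[a_k,b_k]` in the free group on
`Fin k × Bool`, where `(i, false)` represents `a_{i+1}` and `(i, true)` represents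
`b_{i+1}`. -/
def surfRel (k : ℕ) : FreeGroup (Fin k × Bool) :=
  (List.ofFn (fun i : Fin k => ⁅FreeGroup.of (i, false), FreeGroup.of (i, true)⁆)).prod

/-- The genus-`k` surface group `Σ_k`. -/
abbrev SurfaceGroup (k : ℕ) : Type :=
  FreeGroup (Fin k × Bool) ⧸ Subgroup.normalClosure {surfRel k}

/-- The image in `Σ_k` of the free generator indexed by `p`. -/
def sgen (k : ℕ) (p : Fin k × Bool) : SurfaceGroup k :=
  QuotientGroup.mk' (Subgroup.normalClosure {surfRel k}) (FreeGroup.of p)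

/-- `P_j`: the subgroup of `Σ_k` generated by the images of `a_1, b_1, …, a_j, b_j`. -/
def P (k j : ℕ) : Subgroup (SurfaceGroup k) :=
  Subgroup.closure (sgen k '' {p : Fin k × Bool | (p.1 : ℕ) < j})

/-- `Q_j`: the subgroup of `Σ_k` generated by the images of `a_{j+1}, b_{j+1}, …, a_k, b_k`. -/
def Q (k j : ℕ) : Subgroup (SurfaceGroup k) :=
  Subgroup.closure (sgen k '' {p : Fin k × Bool | j ≤ (p.1 : ℕ)})


-- Auxiliary development --

namespace SurfaceAux

open FreeGroup List

/-- A chain-reduced list is its own reduction. -/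
theorem reduce_eq_self {α} [DecidableEq α] {L : List (α × Bool)}
    (h : L.Chain' fun x y => x.1 ≠ y.1) : FreeGroup.reduce L = L := by
  induction L with
  | nil => rfl
  | cons x L ih =>
    have hL : FreeGroup.reduce L = L := ih h.tail
    rw [FreeGroup.reduce.cons, hL]
    cases L with
    | nil => rfl
    | cons y L' =>
      have hxy : x.1 ≠ y.1 := (List.isChain_cons_cons.1 h).1
      simp [hxy]

theorem chain'_flatten_replicate {α} {R : α → α → Prop} {L : List α} (hL : L.Chain' R)
    (hcyc : ∀ x ∈ L.getLast?, ∀ y ∈ L.head?, R x y) :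
    ∀ n : ℕ, ((List.replicate n L).flatten).Chain' R
  | 0 => by simp [List.Chain']
  | (n+1) => by
    rw [List.replicate_succ, List.flatten_cons]
    refine List.IsChain.append hL (chain'_flatten_replicate hL hcyc n) ?_
    intro x hx y hy
    cases L with
    | nil => simp at hx
    | cons a L' =>
      cases n with
      | zero => simp at hy
      | succ n =>
        rw [List.replicate_succ, List.flatten_cons, List.cons_append, List.head?_cons,
          Option.mem_def, Option.some.injEq] at hy
        subst hy
        exact hcyc x hx a rfl

theorem prod_map_mk {α} (l : List (List (α × Bool))) :
    (l.map FreeGroup.mk).prod = FreeGroup.mk l.flatten := by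
  induction l with
  | nil => simp [← FreeGroup.one_eq_mk]
  | cons a l ih => simp [ih, FreeGroup.mul_mk]

/-- The 4-letter word of a commutator of two generators. -/
def blockW {α} (a b : α) : List (α × Bool) := [(a, true), (b, true), (a, false), (b, false)]

theorem commutator_of_eq_mk {α} (a b : α) :
    ⁅FreeGroup.of a, FreeGroup.of b⁆ = FreeGroup.mk (blockW a b) := by
  show FreeGroup.mk [(a, true)] * FreeGroup.mk [(b, true)] *
      (FreeGroup.mk [(a, true)])⁻¹ * (FreeGroup.mk [(b, true)])⁻¹ = _
  rw [FreeGroup.inv_mk, FreeGroup.inv_mk, FreeGroup.mul_mk, FreeGroup.mul_mk, FreeGroup.mul_mk]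
  rfl

/-- The surface-type relator word on `Fin r × Bool`. -/
def bigW (r : ℕ) : List ((Fin r × Bool) × Bool) :=
  (List.ofFn fun i : Fin r => blockW ((i : Fin r), false) (i, true)).flatten

/-- The product of commutators as an element of the free group. -/
def cW (r : ℕ) : FreeGroup (Fin r × Bool) :=
  (List.ofFn fun i : Fin r => ⁅FreeGroup.of (i, false), FreeGroup.of (i, true)⁆).prod

theorem cW_eq_mk (r : ℕ) : cW r = FreeGroup.mk (bigW r) := by
  rw [cW, bigW, ← prod_map_mk, List.map_ofFn]
  simp only [Function.comp_def, commutator_of_eq_mk]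

theorem mk_pow {α} (L : List (α × Bool)) (n : ℕ) :
    (FreeGroup.mk L) ^ n = FreeGroup.mk ((List.replicate n L).flatten) := by
  induction n with
  | zero => simp [← FreeGroup.one_eq_mk]
  | succ n ih =>
    rw [pow_succ', ih, FreeGroup.mul_mk, List.replicate_succ, List.flatten_cons]

theorem map_gensnd_bigW (r : ℕ) :
    (bigW r).map (fun x => x.1.2) = (List.replicate r [false, true, false, true]).flatten := by
  rw [bigW, List.map_flatten, List.map_ofFn, ← List.ofFn_const r [false, true, false, true]]
  rfl

theorem flatten_replicate_flatten {α} (a b : ℕ) (l : List α) :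
    (List.replicate a ((List.replicate b l).flatten)).flatten
      = (List.replicate (a * b) l).flatten := by
  induction a with
  | zero => simp
  | succ a ih =>
    rw [List.replicate_succ, List.flatten_cons, ih,
      show (a + 1) * b = b + a * b by ring, List.replicate_add, List.flatten_append]

theorem cW_pow_ne_one (r : ℕ) (hr : 1 ≤ r) {n : ℕ} (hn : n ≠ 0) : cW r ^ n ≠ 1 := by
  rw [cW_eq_mk, mk_pow]
  intro h
  have hW : (List.replicate n (bigW r)).flatten = [] := by
    rw [← FreeGroup.toWord_eq_nil_iff] at h
    rw [FreeGroup.toWord_mk] at h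
    rw [← h]
    symm
    apply reduce_eq_self
    have hchain : (((List.replicate n (bigW r)).flatten).map fun x => x.1.2).Chain' (· ≠ ·) := by
      rw [List.map_flatten, List.map_replicate, map_gensnd_bigW, flatten_replicate_flatten]
      exact chain'_flatten_replicate (by simp [List.Chain', List.isChain_cons_cons]) (by simp) _
    have := (List.isChain_map (fun x : (Fin r × Bool) × Bool => x.1.2)).1 hchain
    exact this.imp fun {x y} h hxy => h (by rw [hxy])
  have hlen := congrArg List.length hW
  rw [List.length_flatten] at hlen
  simp only [List.map_replicate, List.sum_replicate, smul_eq_mul, List.length_nil] at hlen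
  have hbl : (bigW r).length = 4 * r := by
    rw [bigW, List.length_flatten, List.map_ofFn]
    simp [blockW, Function.comp_def, List.sum_ofFn, mul_comm]
  rw [hbl] at hlen
  rcases Nat.mul_eq_zero.1 hlen with h | h
  · exact hn h
  · omega

theorem cW_zpow_ne_one (r : ℕ) (hr : 1 ≤ r) {n : ℤ} (hn : n ≠ 0) : cW r ^ n ≠ 1 := by
  rcases n with n | n
  · rw [Int.ofNat_eq_coe, zpow_natCast]
    exact cW_pow_ne_one r hr (by simpa using hn)
  · rw [zpow_negSucc]
    simp only [ne_eq, inv_eq_one]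
    exact cW_pow_ne_one r hr (Nat.succ_ne_zero n)

theorem lift_unit_injective {β} (w : FreeGroup β) (hw : ∀ n : ℤ, n ≠ 0 → w ^ n ≠ 1) :
    Function.Injective (FreeGroup.lift fun _ : Unit => w) := by
  rw [injective_iff_map_eq_one]
  intro x hx
  have hxrep : FreeGroup.of () ^ (FreeGroup.freeGroupUnitEquivInt x) = x :=
    FreeGroup.freeGroupUnitEquivInt.left_inv x
  by_contra hx1
  have hn : FreeGroup.freeGroupUnitEquivInt x ≠ 0 := by
    intro h0
    rw [h0, zpow_zero] at hxrep
    exact hx1 hxrep.symm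
  apply hw _ hn
  calc w ^ (FreeGroup.freeGroupUnitEquivInt x)
      = (FreeGroup.lift fun _ : Unit => w) (FreeGroup.of () ^ (FreeGroup.freeGroupUnitEquivInt x)) := by
        rw [map_zpow, FreeGroup.lift_apply_of]
    _ = 1 := by rw [hxrep, hx]

theorem range_freeGroupUnit {G} [Group G] (f : FreeGroup Unit →* G) :
    f.range = Subgroup.zpowers (f (FreeGroup.of ())) := by
  refine le_antisymm (α := Subgroup G) ?_ ?_
  · rintro x ⟨y, rfl⟩
    have hyrep : FreeGroup.of () ^ (FreeGroup.freeGroupUnitEquivInt y) = y :=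
      FreeGroup.freeGroupUnitEquivInt.left_inv y
    rw [← hyrep, map_zpow]
    exact Subgroup.mem_zpowers_iff.2 ⟨_, rfl⟩
  · rw [Subgroup.zpowers_le]
    exact ⟨FreeGroup.of (), rfl⟩

end SurfaceAux

-- part 2 appended after part 1
namespace SurfaceAux

open FreeGroup List Monoid Monoid.PushoutI

abbrev GF (j m : ℕ) : Bool → Type := fun b => FreeGroup ((bif b then Fin m else Fin j) × Bool)

def phi (j m : ℕ) : ∀ b : Bool, FreeGroup Unit →* GF j m b
  | false => FreeGroup.lift fun _ => cW j
  | true => FreeGroup.lift fun _ => (cW m)⁻¹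

theorem phi_injective (j m : ℕ) (hj : 1 ≤ j) (hm : 1 ≤ m) :
    ∀ b, Function.Injective (phi j m b)
  | false => lift_unit_injective _ fun n hn => cW_zpow_ne_one j hj hn
  | true => lift_unit_injective _ fun n hn => by
      rw [inv_zpow, ne_eq, inv_eq_one]
      exact cW_zpow_ne_one m hm hn

/-- The map on generators. -/
def toF (j m : ℕ) (p : Fin (j + m) × Bool) : PushoutI (phi j m) :=
  if h : (p.1 : ℕ) < j then
    PushoutI.of (φ := phi j m) false (FreeGroup.of ((⟨p.1, h⟩ : Fin j), p.2))
  else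
    PushoutI.of (φ := phi j m) true
      (FreeGroup.of ((⟨(p.1 : ℕ) - j, by have := p.1.isLt; omega⟩ : Fin m), p.2))

theorem hom_ofFn_prod {G H : Type*} [Group G] [Group H] (f : G →* H) {n : ℕ} (g : Fin n → G) :
    f (List.ofFn g).prod = (List.ofFn (fun i => f (g i))).prod := by
  rw [map_list_prod, List.map_ofFn]
  rfl

theorem lift_toF_surfRel (j m : ℕ) :
    FreeGroup.lift (toF j m) (surfRel (j + m)) = 1 := by
  rw [surfRel, hom_ofFn_prod]
  simp only [map_commutatorElement, FreeGroup.lift_apply_of]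
  rw [List.ofFn_add, List.prod_append]
  have h1 : (List.ofFn fun i : Fin j =>
      ⁅toF j m (Fin.castAdd m i, false), toF j m (Fin.castAdd m i, true)⁆).prod
      = PushoutI.of (φ := phi j m) false (cW j) := by
    have hf : ∀ (i : Fin j) (s : Bool), toF j m (Fin.castAdd m i, s)
        = PushoutI.of (φ := phi j m) false (FreeGroup.of (i, s)) := by
      intro i s
      rw [toF, dif_pos (by simpa using i.isLt)]
      rfl
    simp only [hf, ← map_commutatorElement]
    rw [cW, hom_ofFn_prod]
  have h2 : (List.ofFn fun i : Fin m =>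
      ⁅toF j m (Fin.natAdd j i, false), toF j m (Fin.natAdd j i, true)⁆).prod
      = PushoutI.of (φ := phi j m) true (cW m) := by
    have hf : ∀ (i : Fin m) (s : Bool), toF j m (Fin.natAdd j i, s)
        = PushoutI.of (φ := phi j m) true (FreeGroup.of (i, s)) := by
      intro i s
      rw [toF, dif_neg (by simp only [Fin.coe_natAdd]; omega)]
      simp only [Fin.coe_natAdd, Nat.add_sub_cancel_left, Fin.eta]
    simp only [hf, ← map_commutatorElement]
    rw [cW, hom_ofFn_prod]
  erw [h1, h2]
  have e1 : PushoutI.of (φ := phi j m) false (cW j)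
      = PushoutI.base (phi j m) (FreeGroup.of ()) := by
    rw [show cW j = phi j m false (FreeGroup.of ()) from (FreeGroup.lift_apply_of ..).symm,
      of_apply_eq_base]
  have e2 : PushoutI.of (φ := phi j m) true (cW m)
      = (PushoutI.base (phi j m) (FreeGroup.of ()))⁻¹ := by
    rw [show cW m = (phi j m true (FreeGroup.of ()))⁻¹ by rw [phi]; simp,
      _root_.map_inv, of_apply_eq_base]
  rw [e1, e2, mul_inv_cancel]

def toPush (j m : ℕ) : SurfaceGroup (j + m) →* PushoutI (phi j m) :=
  QuotientGroup.lift _ (FreeGroup.lift (toF j m))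
    (Subgroup.normalClosure_le_normal (by
      intro x hx
      rw [Set.mem_singleton_iff] at hx
      subst hx
      exact lift_toF_surfRel j m))

theorem toPush_sgen (j m : ℕ) (p : Fin (j + m) × Bool) :
    toPush j m (QuotientGroup.mk' _ (FreeGroup.of p)) = toF j m p := by
  rw [toPush]
  erw [QuotientGroup.lift_mk']
  rw [FreeGroup.lift_apply_of]

end SurfaceAux

namespace SurfaceAux

open FreeGroup List Monoid Monoid.PushoutI

theorem hom_comm_prod {G H : Type*} [Group G] [Group H] (f : G →* H) {n : ℕ}
    (u v : Fin n → G) :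
    f (List.ofFn fun i => ⁅u i, v i⁆).prod = (List.ofFn fun i => ⁅f (u i), f (v i)⁆).prod := by
  rw [hom_ofFn_prod]
  simp only [map_commutatorElement]

theorem toF_castAdd (j m : ℕ) (i : Fin j) (s : Bool) :
    toF j m (Fin.castAdd m i, s) = PushoutI.of (φ := phi j m) false (FreeGroup.of (i, s)) := by
  rw [toF, dif_pos (by simpa using i.isLt)]
  rfl

theorem toF_natAdd (j m : ℕ) (i : Fin m) (s : Bool) :
    toF j m (Fin.natAdd j i, s) = PushoutI.of (φ := phi j m) true (FreeGroup.of (i, s)) := by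
  rw [toF, dif_neg (by simp only [Fin.coe_natAdd]; omega)]
  simp only [Fin.coe_natAdd, Nat.add_sub_cancel_left, Fin.eta]

/-- The maps from the two vertex free groups back to the surface group. -/
def fGF (j m : ℕ) : ∀ b : Bool, GF j m b →* SurfaceGroup (j + m)
  | false => FreeGroup.lift fun p =>
      QuotientGroup.mk' _ (FreeGroup.of ((Fin.castAdd m p.1 : Fin (j + m)), p.2))
  | true => FreeGroup.lift fun p =>
      QuotientGroup.mk' _ (FreeGroup.of ((Fin.natAdd j p.1 : Fin (j + m)), p.2))

/-- The image of `[a_1,b_1]⋯[a_j,b_j]` in the surface group. -/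
def cSG (j m : ℕ) : SurfaceGroup (j + m) :=
  QuotientGroup.mk' _ ((List.ofFn fun i : Fin j =>
    ⁅FreeGroup.of ((Fin.castAdd m i : Fin (j + m)), false),
      FreeGroup.of ((Fin.castAdd m i : Fin (j + m)), true)⁆).prod)

theorem surfRel_split (j m : ℕ) :
    surfRel (j + m) =
      (List.ofFn fun i : Fin j =>
        ⁅FreeGroup.of ((Fin.castAdd m i : Fin (j + m)), false),
          FreeGroup.of ((Fin.castAdd m i : Fin (j + m)), true)⁆).prod *
      (List.ofFn fun i : Fin m =>
        ⁅FreeGroup.of ((Fin.natAdd j i : Fin (j + m)), false),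
          FreeGroup.of ((Fin.natAdd j i : Fin (j + m)), true)⁆).prod := by
  rw [surfRel, List.ofFn_add, List.prod_append]
  rfl

theorem fGF_false_cW (j m : ℕ) : fGF j m false (cW j) = cSG j m := by
  rw [cW, cSG, fGF, hom_comm_prod, hom_comm_prod]
  simp only [FreeGroup.lift_apply_of]

theorem fGF_true_cW (j m : ℕ) :
    fGF j m true (cW m) = QuotientGroup.mk' _ ((List.ofFn fun i : Fin m =>
      ⁅FreeGroup.of ((Fin.natAdd j i : Fin (j + m)), false),
        FreeGroup.of ((Fin.natAdd j i : Fin (j + m)), true)⁆).prod) := by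
  rw [cW, fGF, hom_comm_prod, hom_comm_prod]
  simp only [FreeGroup.lift_apply_of]

theorem rel_eq_one (j m : ℕ) : cSG j m * fGF j m true (cW m) = 1 := by
  rw [fGF_true_cW, cSG, ← _root_.map_mul, ← surfRel_split]
  exact (QuotientGroup.eq_one_iff _).2 (Subgroup.subset_normalClosure (Set.mem_singleton _))

/-- The base map back to the surface group. -/
def fbase (j m : ℕ) : FreeGroup Unit →* SurfaceGroup (j + m) :=
  FreeGroup.lift fun _ => cSG j m

theorem hcomm (j m : ℕ) : ∀ b : Bool, (fGF j m b).comp (phi j m b) = fbase j m := by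
  intro b
  apply FreeGroup.ext_hom
  intro _
  cases b
  · show fGF j m false (phi j m false (FreeGroup.of ())) = fbase j m (FreeGroup.of ())
    rw [phi, fbase, FreeGroup.lift_apply_of, FreeGroup.lift_apply_of, fGF_false_cW]
  · show fGF j m true (phi j m true (FreeGroup.of ())) = fbase j m (FreeGroup.of ())
    rw [phi, fbase, FreeGroup.lift_apply_of, FreeGroup.lift_apply_of, _root_.map_inv]
    exact inv_eq_of_mul_eq_one_left (rel_eq_one j m)

/-- The homomorphism from the pushout back to the surface group. -/
def fromPush (j m : ℕ) : PushoutI (phi j m) →* SurfaceGroup (j + m) :=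
  PushoutI.lift (fGF j m) (fbase j m) (hcomm j m)

theorem fromPush_toF (j m : ℕ) (p : Fin (j + m) × Bool) :
    fromPush j m (toF j m p) = QuotientGroup.mk' _ (FreeGroup.of p) := by
  rw [toF]
  split_ifs with h
  · rw [fromPush, PushoutI.lift_of]
    show FreeGroup.lift _ _ = _
    rw [FreeGroup.lift_apply_of]
    rfl
  · rw [fromPush, PushoutI.lift_of]
    show FreeGroup.lift _ _ = _
    rw [FreeGroup.lift_apply_of]
    congr 2
    refine Prod.ext ?_ rfl
    exact Fin.ext (by simp only [Fin.coe_natAdd]; omega)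

theorem fromPush_toPush (j m : ℕ) :
    Function.LeftInverse (fromPush j m) (toPush j m) := by
  intro x
  have h : (fromPush j m).comp (toPush j m) = MonoidHom.id _ := by
    apply QuotientGroup.monoidHom_ext
    apply FreeGroup.ext_hom
    intro p
    show fromPush j m (toPush j m (QuotientGroup.mk' _ (FreeGroup.of p)))
      = QuotientGroup.mk' _ (FreeGroup.of p)
    rw [toPush_sgen, fromPush_toF]
  exact DFunLike.congr_fun h x

theorem toPush_injective (j m : ℕ) : Function.Injective (toPush j m) :=
  (fromPush_toPush j m).injective

theorem of_false_cW (j m : ℕ) :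
    PushoutI.of (φ := phi j m) false (cW j) = PushoutI.base (phi j m) (FreeGroup.of ()) := by
  rw [show cW j = phi j m false (FreeGroup.of ()) from (FreeGroup.lift_apply_of ..).symm,
    of_apply_eq_base]

theorem toPush_cSG (j m : ℕ) :
    toPush j m (cSG j m) = PushoutI.base (phi j m) (FreeGroup.of ()) := by
  rw [cSG, toPush]
  erw [QuotientGroup.lift_mk']
  rw [hom_comm_prod]
  simp only [FreeGroup.lift_apply_of]
  rw [← of_false_cW j m, cW, hom_comm_prod]
  simp only [toF_castAdd]

end SurfaceAux

namespace SurfaceAux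

open FreeGroup List Monoid Monoid.PushoutI

theorem map_P (j m : ℕ) :
    (P (j + m) j).map (toPush j m) = (PushoutI.of (φ := phi j m) false).range := by
  rw [P, MonoidHom.map_closure, MonoidHom.range_eq_map,
    ← FreeGroup.closure_range_of ((Fin j) × Bool), MonoidHom.map_closure]
  congr 1
  ext x
  constructor
  · rintro ⟨_, ⟨p, hp, rfl⟩, rfl⟩
    refine ⟨FreeGroup.of ((⟨(p.1 : ℕ), hp⟩ : Fin j), p.2), Set.mem_range_self _, ?_⟩
    show PushoutI.of (φ := phi j m) false _ = toPush j m (QuotientGroup.mk' _ (FreeGroup.of p))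
    rw [toPush_sgen, toF, dif_pos (show ((p.1 : ℕ) < j) from hp)]
  · rintro ⟨_, ⟨q, rfl⟩, rfl⟩
    refine ⟨sgen (j + m) (Fin.castAdd m q.1, q.2),
      ⟨(Fin.castAdd m q.1, q.2), by simpa using q.1.isLt, rfl⟩, ?_⟩
    show toPush j m (QuotientGroup.mk' _ (FreeGroup.of _)) = _
    rw [toPush_sgen]
    exact toF_castAdd j m q.1 q.2

theorem map_Q (j m : ℕ) :
    (Q (j + m) j).map (toPush j m) = (PushoutI.of (φ := phi j m) true).range := by
  rw [Q, MonoidHom.map_closure, MonoidHom.range_eq_map,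
    ← FreeGroup.closure_range_of ((Fin m) × Bool), MonoidHom.map_closure]
  congr 1
  ext x
  constructor
  · rintro ⟨_, ⟨p, hp, rfl⟩, rfl⟩
    refine ⟨FreeGroup.of ((⟨(p.1 : ℕ) - j, by have := p.1.isLt; have h2 : j ≤ (p.1 : ℕ) := hp; omega⟩ : Fin m), p.2),
      Set.mem_range_self _, ?_⟩
    show PushoutI.of (φ := phi j m) true _ = toPush j m (QuotientGroup.mk' _ (FreeGroup.of p))
    rw [toPush_sgen, toF, dif_neg (show ¬ ((p.1 : ℕ) < j) by have : j ≤ (p.1 : ℕ) := hp; omega)]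
  · rintro ⟨_, ⟨q, rfl⟩, rfl⟩
    refine ⟨sgen (j + m) (Fin.natAdd j q.1, q.2),
      ⟨(Fin.natAdd j q.1, q.2), by simp, rfl⟩, ?_⟩
    show toPush j m (QuotientGroup.mk' _ (FreeGroup.of _)) = _
    rw [toPush_sgen]
    exact toF_natAdd j m q.1 q.2

theorem main (j m : ℕ) (hj : 1 ≤ j) (hm : 1 ≤ m) :
    P (j + m) j ⊓ Q (j + m) j = Subgroup.zpowers (cSG j m) := by
  apply Subgroup.map_injective (toPush_injective j m)
  rw [Subgroup.map_inf _ _ _ (toPush_injective j m), map_P, map_Q, MonoidHom.map_zpowers,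
    toPush_cSG,
    Monoid.PushoutI.inf_of_range_eq_base_range (phi_injective j m hj hm)
      (show (false : Bool) ≠ true by decide),
    range_freeGroupUnit]

end SurfaceAux

/-- In the genus-`k` surface group `Σ_k` (`k ≥ 2`, `1 ≤ j ≤ k-1`), the intersection
`P_j ∩ Q_j` is the cyclic subgroup generated by the image `c` of the element
`[a_1,b_1][a_2,b_2]⋯[a_j,b_j]`. -/
theorem surface_intersection_eq_zpowers (k j : ℕ) (hk : 2 ≤ k) (hj : 1 ≤ j)
    (hjk : j ≤ k - 1) :
    P k j ⊓ Q k j =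
      Subgroup.zpowers
        (QuotientGroup.mk' (Subgroup.normalClosure {surfRel k})
          ((List.ofFn (fun i : Fin j =>
            ⁅FreeGroup.of ((Fin.castLE (by omega) i : Fin k), false),
              FreeGroup.of ((Fin.castLE (by omega) i : Fin k), true)⁆)).prod)) := by
  obtain ⟨m, rfl⟩ : ∃ m, k = j + m := ⟨k - j, by omega⟩
  have hm : 1 ≤ m := by omega
  exact SurfaceAux.main j m hj hm
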